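/- If m + n ≡ 0 (mod q−1), then D(q; m, n) is isomorphic to D(q; n, m). -/

import Mathlib

/-- The arc relation of the monomial digraph `D(q; m, n)`. -/
def monArc {F : Type*} [Field F] (m n : ℕ) (u v : F × F) : Prop :=
  u.2 + v.2 = u.1 ^ m * v.1 ^ n

/-- If `m + n ≡ 0 (mod q−1)`, then `D(q; m, n) ≅ D(q; n, m)`. -/
theorem stmt_5 {F : Type*} [Field F] [Fintype F] (q : ℕ) (hq : Fintype.card F = q)
    (m n : ℕ) (hm : 1 ≤ m ∧ m ≤ q - 1) (hn : 1 ≤ n ∧ n ≤ q - 1)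
    (h : m + n ≡ 0 [MOD q - 1]) :
    ∃ φ : (F × F) ≃ (F × F),
      ∀ u v : F × F, monArc m n u v ↔ monArc n m (φ u) (φ v) := by
  have hdvd : (q - 1) ∣ m + n := (Nat.modEq_zero_iff_dvd).mp h
  have key : ∀ (a b : ℕ), 1 ≤ a → 1 ≤ b → (q - 1) ∣ a + b →
      ∀ x : F, x ^ a = (x⁻¹) ^ b := by
    intro a b ha hb hab x
    rcases eq_or_ne x 0 with rfl | hx
    · rw [inv_zero, zero_pow (by omega), zero_pow (by omega)]
    · obtain ⟨k, hk⟩ := hab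
      have h1 : x ^ (a + b) = 1 := by
        rw [hk, pow_mul]
        rw [← hq] at *
        rw [FiniteField.pow_card_sub_one_eq_one x hx, one_pow]
      rw [inv_pow]
      field_simp
      rw [← pow_add, h1]
  refine ⟨(Function.Involutive.toPerm (fun x : F => x⁻¹) inv_inv).prodCongr (Equiv.refl F), ?_⟩
  intro u v
  simp only [monArc, Equiv.prodCongr_apply, Function.Involutive.coe_toPerm, Equiv.refl_apply,
    Prod.map]
  rw [key m n hm.1 hn.1 hdvd u.1, key n m hn.1 hm.1 (by rwa [Nat.add_comm]) v.1]
  rfl
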